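/- Let F : C ⥤ X be a faithful essential localization such that: every pullback stable essential monomorphism in X is an isomorphism; every pushout stable essential epimorphism in X is an isomorphism; and X is balanced. Then the opposite functor F^op : C^op ⥤ X^op is a localization functor (in the sense of categories of fractions) of C^op with respect to the class of pullback stable essential monomorphisms of C^op; consequently Spec(C) ≃ X and Spec(C^op) ≃ X^op, so Spec(C) ≃ Spec(C^op)^op. -/

import Mathlib

open CategoryTheory Limits

/-- A morphism `m` is an essential monomorphism if it is a monomorphism and every
morphism `f` such that `m ≫ f` is a monomorphism is itself a monomorphism. -/
def IsEssentialMono {C : Type*} [CategoryTheory.Category C] {S A : C} (m : S ⟶ A) : Prop :=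
  CategoryTheory.Mono m ∧
    ∀ ⦃B : C⦄ (f : A ⟶ B), CategoryTheory.Mono (m ≫ f) → CategoryTheory.Mono f

/-- A morphism `m : S ⟶ A` is a pullback stable essential monomorphism if for every
morphism `u : X ⟶ A` the pullback projection `S ×_A X ⟶ X` of `m` along `u` is an
essential monomorphism. -/
def IsStableEssentialMono {C : Type*} [CategoryTheory.Category C]
    [CategoryTheory.Limits.HasPullbacks C] {S A : C} (m : S ⟶ A) : Prop :=
  ∀ ⦃X : C⦄ (u : X ⟶ A), IsEssentialMono (CategoryTheory.Limits.pullback.snd m u)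

/-- A morphism `e` is an essential epimorphism if it is an epimorphism and every
morphism `f` such that `f ≫ e` is an epimorphism is itself an epimorphism. -/
def IsEssentialEpi {C : Type*} [CategoryTheory.Category C] {A B : C} (e : A ⟶ B) : Prop :=
  CategoryTheory.Epi e ∧
    ∀ ⦃Z : C⦄ (f : Z ⟶ A), CategoryTheory.Epi (f ≫ e) → CategoryTheory.Epi f

/-- A morphism `e : A ⟶ B` is a pushout stable essential epimorphism if for every
morphism `u : A ⟶ Y` the pushout coprojection `Y ⟶ B ⊔_A Y` of `e` along `u` is an
essential epimorphism. -/
def IsStableEssentialEpi {C : Type*} [CategoryTheory.Category C]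
    [CategoryTheory.Limits.HasPushouts C] {A B : C} (e : A ⟶ B) : Prop :=
  ∀ ⦃Y : C⦄ (u : A ⟶ Y), IsEssentialEpi (CategoryTheory.Limits.pushout.inr e u)

/-- The class of pullback stable essential monomorphisms, as a `MorphismProperty`. -/
def stableEssentialMonos (C : Type*) [Category C] [HasPullbacks C] :
    CategoryTheory.MorphismProperty C :=
  fun _ _ m => IsStableEssentialMono m

section Helpers

variable {C : Type*} [Category C]

/-- Essential monomorphisms are stable under composition with isomorphisms on both sides. -/
theorem IsEssentialMono.conj {P' P Y Y' : C} {p : P ⟶ Y} (h : IsEssentialMono p)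
    (e₁ : P' ⟶ P) (e₂ : Y ⟶ Y') [IsIso e₁] [IsIso e₂] :
    IsEssentialMono (e₁ ≫ p ≫ e₂) := by
  obtain ⟨h1, h2⟩ := h
  haveI := h1
  constructor
  · exact mono_comp _ _
  · intro B f hf
    have h3 : Mono (p ≫ (e₂ ≫ f)) := by
      have e : p ≫ e₂ ≫ f = inv e₁ ≫ ((e₁ ≫ p ≫ e₂) ≫ f) := by simp
      rw [e]
      haveI := hf
      exact mono_comp _ _
    haveI := h2 (e₂ ≫ f) h3
    have e : f = inv e₂ ≫ (e₂ ≫ f) := by simp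
    rw [e]
    exact mono_comp _ _

/-- Essential epimorphisms are stable under composition with an isomorphism on the right. -/
theorem IsEssentialEpi.compIso {P Y Y' : C} {p : P ⟶ Y} (h : IsEssentialEpi p)
    (e : Y ⟶ Y') [IsIso e] : IsEssentialEpi (p ≫ e) := by
  obtain ⟨h1, h2⟩ := h
  haveI := h1
  constructor
  · exact epi_comp _ _
  · intro Z f hf
    apply h2 f
    have eq : f ≫ p = (f ≫ (p ≫ e)) ≫ inv e := by simp
    rw [eq]
    haveI := hf
    exact epi_comp _ _

/-- An essential monomorphism in the opposite category gives an essential epimorphism. -/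
theorem IsEssentialMono.unop' {S A : Cᵒᵖ} {m : S ⟶ A} (h : IsEssentialMono m) :
    IsEssentialEpi m.unop := by
  obtain ⟨h1, h2⟩ := h
  haveI := h1
  constructor
  · infer_instance
  · intro Z g hg
    have hm : Mono (m ≫ g.op) := by
      have e : m ≫ g.op = (g ≫ m.unop).op := rfl
      rw [e]
      haveI := hg
      infer_instance
    haveI := h2 g.op hm
    have e : g = (g.op).unop := rfl
    rw [e]
    infer_instance

/-- A pullback stable essential monomorphism in the opposite category gives a pushout
stable essential epimorphism. -/
theorem isStableEssentialEpi_unop [HasPushouts C] {S A : Cᵒᵖ} (n : S ⟶ A)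
    (hn : IsStableEssentialMono n) : IsStableEssentialEpi n.unop := by
  intro Y u
  have h1 : IsEssentialEpi ((pullback.snd n u.op).unop) := (hn u.op).unop'
  have hpo : IsPushout n.unop u (pullback.fst n u.op).unop (pullback.snd n u.op).unop :=
    (IsPullback.of_hasPullback n u.op).unop.flip
  have eq : pushout.inr n.unop u = (pullback.snd n u.op).unop ≫ hpo.isoPushout.hom := by
    have h2 := hpo.inr_isoPushout_inv
    calc pushout.inr n.unop u
        = (pushout.inr n.unop u ≫ hpo.isoPushout.inv) ≫ hpo.isoPushout.hom := by
          rw [Category.assoc, Iso.inv_hom_id, Category.comp_id]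
      _ = (pullback.snd n u.op).unop ≫ hpo.isoPushout.hom := by rw [h2]
  rw [eq]
  exact h1.compIso _

end Helpers

section Main

variable {C X : Type*} [Category C] [Category X]

theorem isIso_map_pullback_snd' (F : C ⥤ X) [HasPullbacks C] [HasPullbacks X]
    [PreservesLimitsOfShape WalkingCospan F] {A B V : C} (f : A ⟶ B) (u : V ⟶ B)
    (hf : IsIso (F.map f)) : IsIso (F.map (pullback.snd f u)) := by
  haveI := hf
  rw [← PreservesPullback.iso_hom_snd F f u]
  infer_instance

theorem isIso_map_pullback_fst' (F : C ⥤ X) [HasPullbacks C] [HasPullbacks X]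
    [PreservesLimitsOfShape WalkingCospan F] {A B V : C} (f : A ⟶ B) (u : V ⟶ B)
    (hu : IsIso (F.map u)) : IsIso (F.map (pullback.fst f u)) := by
  haveI := hu
  rw [← PreservesPullback.iso_hom_fst F f u]
  infer_instance

/-- A faithful pullback-preserving functor inverts only pullback stable essential
monomorphisms. -/
theorem stableEssentialMono_of_isIso_map (F : C ⥤ X) [HasPullbacks C] [HasPullbacks X]
    [F.Faithful] [PreservesLimitsOfShape WalkingCospan F] {A B : C} (f : A ⟶ B)
    (hf : IsIso (F.map f)) : IsStableEssentialMono f := by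
  intro V u
  have hp : IsIso (F.map (pullback.snd f u)) := isIso_map_pullback_snd' F f u hf
  set p := pullback.snd f u with hpdef
  constructor
  · exact F.mono_of_mono_map (by haveI := hp; infer_instance)
  · intro Z g hg
    constructor
    intro W a b hab
    set qa := pullback.snd p a with hqa
    set qb := pullback.snd p b with hqb
    have hqa' : IsIso (F.map qa) := isIso_map_pullback_snd' F p a hp
    have hqb' : IsIso (F.map qb) := isIso_map_pullback_snd' F p b hp
    have hfstT : IsIso (F.map (pullback.fst qa qb)) := isIso_map_pullback_fst' F qa qb hqb'
    set t := pullback.fst qa qb ≫ qa with ht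
    have htepi : Epi t := by
      apply F.epi_of_epi_map
      rw [F.map_comp]
      haveI := hfstT
      haveI := hqa'
      exact epi_comp _ _
    set α := pullback.fst qa qb ≫ pullback.fst p a with hα
    set β := pullback.snd qa qb ≫ pullback.fst p b with hβ
    have hαp : α ≫ p = t ≫ a := by
      rw [hα, ht, Category.assoc, Category.assoc, pullback.condition]
    have hβp : β ≫ p = t ≫ b := by
      rw [hβ, ht, Category.assoc, Category.assoc, pullback.condition,
        ← Category.assoc, ← pullback.condition (f := qa) (g := qb), Category.assoc]
    have hαβ : α = β := by
      haveI := hg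
      apply (cancel_mono (p ≫ g)).1
      rw [← Category.assoc, ← Category.assoc, hαp, hβp, ht]
      simp only [Category.assoc, hab]
    have : t ≫ a = t ≫ b := by rw [← hαp, hαβ, hβp]
    exact (cancel_epi t).1 this

/-- The image of an essential monomorphism under the reflector of a faithful localization
is an essential monomorphism. -/
theorem map_essentialMono (F : C ⥤ X) (G : X ⥤ C) (adj : F ⊣ G) [F.Faithful]
    [F.PreservesMonomorphisms] [G.Full] [G.Faithful] {S A : C} {q : S ⟶ A}
    (hq : IsEssentialMono q) : IsEssentialMono (F.map q) := by
  obtain ⟨hq1, hq2⟩ := hq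
  haveI := hq1
  constructor
  · infer_instance
  · intro Z g hg
    have key : F.map ((adj.homEquiv A Z) g) ≫ adj.counit.app Z = g := by
      have h := adj.homEquiv_counit (X := A) (Y := Z) (g := (adj.homEquiv A Z) g)
      rw [← h]
      exact (adj.homEquiv A Z).symm_apply_apply g
    have h1 : Mono (q ≫ (adj.homEquiv A Z) g) := by
      apply F.mono_of_mono_map
      rw [F.map_comp]
      have e : F.map ((adj.homEquiv A Z) g) = g ≫ inv (adj.counit.app Z) := by
        rw [IsIso.eq_comp_inv]
        exact key
      rw [e, ← Category.assoc]
      haveI := hg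
      exact mono_comp _ _
    haveI := hq2 _ h1
    haveI : Mono (F.map ((adj.homEquiv A Z) g)) := inferInstance
    rw [← key]
    exact mono_comp _ _

/-- The reflector of a faithful essential localization inverts pullback stable
essential monomorphisms, provided stable essential monomorphisms in the base are
isomorphisms and the unit of the left-adjoint adjunction is invertible. -/
theorem isIso_map_of_stableEssentialMono (F : C ⥤ X) (G : X ⥤ C) (H : X ⥤ C)
    (adj : F ⊣ G) (adj' : H ⊣ F) [HasPullbacks C] [HasPullbacks X] [F.Faithful]
    [F.PreservesMonomorphisms] [G.Full] [G.Faithful]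
    [PreservesLimitsOfShape WalkingCospan F]
    (hunit : ∀ Y, IsIso (adj'.unit.app Y))
    (hX : ∀ ⦃S A : X⦄ (n : S ⟶ A), IsStableEssentialMono n → IsIso n)
    {S A : C} (m : S ⟶ A) (hm : IsStableEssentialMono m) : IsIso (F.map m) := by
  apply hX
  intro Y u
  haveI := hunit Y
  set v := (adj'.homEquiv Y A).symm u with hv
  have hu : adj'.unit.app Y ≫ F.map v = u := by
    have h := adj'.homEquiv_unit (X := Y) (Y := A) (f := v)
    rw [← h, hv]
    exact (adj'.homEquiv Y A).apply_symm_apply u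
  have hq : IsEssentialMono (F.map (pullback.snd m v)) :=
    map_essentialMono F G adj (hm v)
  have h1 : IsPullback (F.map (pullback.fst m v)) (F.map (pullback.snd m v))
      (F.map m) (F.map v) := (IsPullback.of_hasPullback m v).map F
  have h2 : IsPullback (F.map (pullback.fst m v))
      (F.map (pullback.snd m v) ≫ inv (adj'.unit.app Y)) (F.map m) u :=
    h1.of_iso (Iso.refl _) (Iso.refl _) (asIso (adj'.unit.app Y)).symm (Iso.refl _)
      (by simp) (by simp) (by simp) (by simp [← hu])
  have h3 : pullback.snd (F.map m) u =
      h2.isoPullback.inv ≫ (F.map (pullback.snd m v) ≫ inv (adj'.unit.app Y)) :=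
    (h2.isoPullback_inv_snd).symm
  rw [h3]
  exact hq.conj _ _

/-- With a fully faithful right adjoint above and a left adjoint below, the unit of
the lower adjunction is invertible when the middle category is balanced. -/
theorem unit_app_isIso (F : C ⥤ X) (G : X ⥤ C) (H : X ⥤ C) (adj : F ⊣ G) (adj' : H ⊣ F)
    [G.Full] [G.Faithful] [Balanced X] (Y : X) : IsIso (adj'.unit.app Y) := by
  have hmono : Mono (adj'.unit.app Y) := by
    constructor
    intro W a b hab
    have e1 : ∀ (x : W ⟶ Y),
        (adj'.homEquiv W (H.obj Y)).symm (x ≫ adj'.unit.app Y) = H.map x := by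
      intro x
      rw [Adjunction.homEquiv_counit, H.map_comp, Category.assoc,
        adj'.left_triangle_components, Category.comp_id]
    have hH : H.map a = H.map b := by
      rw [← e1 a, ← e1 b, hab]
    have e3 : a ≫ inv (adj.counit.app Y) = b ≫ inv (adj.counit.app Y) := by
      apply (adj'.homEquiv W (G.obj Y)).symm.injective
      rw [Adjunction.homEquiv_counit, Adjunction.homEquiv_counit, H.map_comp,
        H.map_comp, hH]
    exact (cancel_mono (inv (adj.counit.app Y))).1 e3
  have hepi : Epi (adj'.unit.app Y) := by
    constructor
    intro W a b hab
    have e1 : ∀ (x : F.obj (H.obj Y) ⟶ W),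
        x = F.map ((adj.homEquiv (H.obj Y) W) x) ≫ adj.counit.app W := by
      intro x
      have h := adj.homEquiv_counit (X := H.obj Y) (Y := W)
        (g := (adj.homEquiv (H.obj Y) W) x)
      rw [← h]
      exact ((adj.homEquiv _ _).symm_apply_apply x).symm
    have e3 : adj'.unit.app Y ≫ F.map ((adj.homEquiv (H.obj Y) W) a) =
        adj'.unit.app Y ≫ F.map ((adj.homEquiv (H.obj Y) W) b) := by
      have h := hab
      rw [e1 a, e1 b, ← Category.assoc, ← Category.assoc] at h
      exact (cancel_mono (adj.counit.app W)).1 h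
    have e4 : (adj.homEquiv (H.obj Y) W) a = (adj.homEquiv (H.obj Y) W) b := by
      apply (adj'.homEquiv Y (G.obj W)).injective
      rw [Adjunction.homEquiv_unit, Adjunction.homEquiv_unit]
      exact e3
    rw [e1 a, e1 b, e4]
  exact isIso_of_mono_of_epi _

end Main

/-- Let `F : C ⥤ X` be a faithful essential localization such that every pullback stable
essential monomorphism in `X` is an isomorphism, every pushout stable essential
epimorphism in `X` is an isomorphism, and `X` is balanced. Then `F` exhibits `X` as the
category of fractions `Spec(C)` of `C` at the pullback stable essential monomorphisms,
and `F.op : Cᵒᵖ ⥤ Xᵒᵖ` exhibits `Xᵒᵖ` as the category of fractions `Spec(Cᵒᵖ)` of `Cᵒᵖ`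
at the pullback stable essential monomorphisms of `Cᵒᵖ`; consequently
`Spec(C) ≃ X ≃ Spec(Cᵒᵖ)ᵒᵖ`. -/
theorem isLocalization_op
    {C : Type*} [Category C] {X : Type*} [Category X]
    [HasFiniteLimits C] [HasFiniteLimits X]
    [HasFiniteColimits C] [HasFiniteColimits X] [Balanced X]
    (F : C ⥤ X) (G : X ⥤ C) (H : X ⥤ C)
    (adj : F ⊣ G) [PreservesFiniteLimits F] [F.Faithful] [G.Full] [G.Faithful]
    (adj' : H ⊣ F)
    (hX : ∀ ⦃S A : X⦄ (n : S ⟶ A), IsStableEssentialMono n → IsIso n)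
    (hX' : ∀ ⦃A B : X⦄ (e : A ⟶ B), IsStableEssentialEpi e → IsIso e) :
    F.IsLocalization (stableEssentialMonos C) ∧
      F.op.IsLocalization (stableEssentialMonos Cᵒᵖ) := by
  haveI hunit : ∀ Y, IsIso (adj'.unit.app Y) := fun Y => unit_app_isIso F G H adj adj' Y
  haveI : IsIso adj'.unit := NatIso.isIso_of_isIso_app _
  haveI : H.Full := adj'.fullyFaithfulLOfIsIsoUnit.full
  haveI : H.Faithful := adj'.fullyFaithfulLOfIsIsoUnit.faithful
  have eqA : stableEssentialMonos C = (MorphismProperty.isomorphisms X).inverseImage F := by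
    ext A B f
    constructor
    · intro hf
      exact isIso_map_of_stableEssentialMono F G H adj adj' hunit hX f hf
    · intro hf
      exact stableEssentialMono_of_isIso_map F f hf
  constructor
  · rw [eqA]
    exact adj.isLocalization
  · haveI : PreservesColimitsOfSize.{0, 0} F := adj.leftAdjoint_preservesColimits
    haveI : PreservesLimitsOfShape WalkingCospan F.op := preservesLimitsOfShape_op WalkingCospan F
    have hXop : ∀ ⦃S A : Xᵒᵖ⦄ (n : S ⟶ A), IsStableEssentialMono n → IsIso n := by
      intro S A n hn
      haveI := hX' n.unop (isStableEssentialEpi_unop n hn)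
      exact (isIso_unop_iff n).1 inferInstance
    have eqB : stableEssentialMonos Cᵒᵖ =
        (MorphismProperty.isomorphisms Xᵒᵖ).inverseImage F.op := by
      ext A B f
      constructor
      · intro hf
        exact isIso_map_of_stableEssentialMono F.op H.op G.op
          adj'.op
          adj.op
          (fun Y => inferInstance) hXop f hf
      · intro hf
        exact stableEssentialMono_of_isIso_map F.op f hf
    rw [eqB]
    exact adj'.op.isLocalization
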